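/- Let Φ be a crystallographic root system, F a face of the root polytope P_Φ defined by a functional λ with (λ, u) = 1 on F and (λ, β) ≤ 1 for all roots β. Then the monoid M(F) = C(V(F)) ∩ R is the union of the sets γ + N(F) where γ ranges over the ≤_F-minimal elements of M(F) (including 0); in particular every descending chain in (M(F), ≤_F) is finite. -/

import Mathlib

open scoped RealInnerProductSpace

/-- A crystallographic reduced root system in a real inner product space. -/
structure IsRootSystem {E : Type*} [NormedAddCommGroup E] [InnerProductSpace ℝ E]
    (Φ : Set E) : Prop where
  finite : Φ.Finite
  nonempty : Φ.Nonempty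
  zero_not_mem : (0 : E) ∉ Φ
  span_eq_top : Submodule.span ℝ Φ = ⊤
  reflection_mem : ∀ α ∈ Φ, ∀ β ∈ Φ, β - (2 * ⟪α, β⟫ / ⟪α, α⟫) • α ∈ Φ
  crystallographic : ∀ α ∈ Φ, ∀ β ∈ Φ, ∃ n : ℤ, 2 * ⟪α, β⟫ / ⟪α, α⟫ = (n : ℝ)
  reduced : ∀ α ∈ Φ, ∀ t : ℝ, t • α ∈ Φ → t = 1 ∨ t = -1

/-- The cone of nonnegative rational linear combinations of elements of `V`. -/
def coneQ {E : Type*} [NormedAddCommGroup E] [InnerProductSpace ℝ E] (V : Set E) : Set E :=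
  {x | ∃ c : E →₀ ℚ, (∀ y, 0 ≤ c y) ∧ ↑c.support ⊆ V ∧ (c.sum fun y a => (a : ℝ) • y) = x}

/-- Let `F` be the face of the root polytope exposed by a functional `l` with
`(l, β) ≤ 1` on `Φ`, `V(F) = {β ∈ Φ | (l, β) = 1}`, `N(F)` the ℕ-span of
`V(F)` and `M(F) = C(V(F)) ∩ R`.  Then `M(F)` is the union of the sets
`γ + N(F)` with `γ` ranging over the `≤_F`-minimal elements of `M(F)`
(including `0`); in particular every strictly `≤_F`-descending chain in `M(F)`
is finite. -/
theorem monoid_union_of_minimal {E : Type*} [NormedAddCommGroup E]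
    [InnerProductSpace ℝ E] (Φ : Set E) (hΦ : IsRootSystem Φ)
    (l : E) (hl : ∀ β ∈ Φ, ⟪l, β⟫ ≤ 1)
    (V : Set E) (hV : V = {β ∈ Φ | ⟪l, β⟫ = 1})
    (N : AddSubmonoid E) (hN : N = AddSubmonoid.closure V)
    (M : Set E) (hM : M = coneQ V ∩ (AddSubgroup.closure Φ : Set E)) :
    (∀ x ∈ M, ∃ γ ∈ M, (∀ y ∈ M, γ - y ∈ N → y = γ) ∧ x - γ ∈ N) ∧
    ∀ f : ℕ → E, (∀ n, f n ∈ M) →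
      ¬ (∀ n, f n - f (n + 1) ∈ N ∧ f (n + 1) ≠ f n) := by
  -- l pairs to 1 with V
  have hVl : ∀ v ∈ V, ⟪l, v⟫ = 1 := by
    intro v hv; rw [hV] at hv; exact hv.2
  -- elements of N: nonneg pairing; nonzero elements pair ≥ 1
  have hNkey : ∀ n ∈ N, 0 ≤ ⟪l, n⟫ ∧ (n = 0 ∨ 1 ≤ ⟪l, n⟫) := by
    intro n hn
    rw [hN] at hn
    induction hn using AddSubmonoid.closure_induction with
    | mem v hv => exact ⟨by rw [hVl v hv]; norm_num, Or.inr (le_of_eq (hVl v hv).symm)⟩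
    | zero => simp
    | add a b _ _ ha hb =>
      refine ⟨by rw [inner_add_right]; linarith [ha.1, hb.1], ?_⟩
      rcases ha.2 with h | h
      · rcases hb.2 with h' | h'
        · exact Or.inl (by rw [h, h', add_zero])
        · exact Or.inr (by rw [inner_add_right]; linarith [ha.1])
      · exact Or.inr (by rw [inner_add_right]; linarith [hb.1])
  -- elements of M pair nonnegatively
  have hMnn : ∀ x ∈ M, 0 ≤ ⟪l, x⟫ := by
    intro x hx
    rw [hM] at hx
    obtain ⟨c, hc0, hcs, hcsum⟩ := hx.1
    rw [← hcsum, Finsupp.sum, inner_sum]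
    apply Finset.sum_nonneg
    intro y hy
    rw [real_inner_smul_right, hVl y (hcs hy), mul_one]
    exact_mod_cast hc0 y
  have hN0 : (0 : E) ∈ N := N.zero_mem
  -- key induction
  have key : ∀ n : ℕ, ∀ x ∈ M, ⟪l, x⟫ ≤ n →
      ∃ γ ∈ M, (∀ y ∈ M, γ - y ∈ N → y = γ) ∧ x - γ ∈ N := by
    intro n
    induction n with
    | zero =>
      intro x hx hxn
      refine ⟨x, hx, ?_, by simpa using hN0⟩
      intro y hy hxy
      by_contra hne
      have h1 : 1 ≤ ⟪l, x - y⟫ :=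
        (hNkey _ hxy).2.resolve_left (sub_ne_zero_of_ne fun h => hne h.symm)
      rw [inner_sub_right] at h1
      have := hMnn y hy
      simp only [Nat.cast_zero] at hxn
      linarith
    | succ n ih =>
      intro x hx hxn
      by_cases hmin : ∀ y ∈ M, x - y ∈ N → y = x
      · exact ⟨x, hx, hmin, by simpa using hN0⟩
      · push_neg at hmin
        obtain ⟨y, hy, hxy, hne⟩ := hmin
        have h1 : 1 ≤ ⟪l, x - y⟫ :=
          (hNkey _ hxy).2.resolve_left (sub_ne_zero_of_ne fun h => hne h.symm)
        rw [inner_sub_right] at h1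
        have hyb : ⟪l, y⟫ ≤ n := by push_cast at hxn ⊢; linarith
        obtain ⟨γ, hγM, hγmin, hyγ⟩ := ih y hy hyb
        refine ⟨γ, hγM, hγmin, ?_⟩
        have := N.add_mem hxy hyγ
        rwa [sub_add_sub_cancel] at this
  constructor
  · intro x hx
    obtain ⟨n, hn⟩ := exists_nat_ge ⟪l, x⟫
    exact key n x hx hn
  · intro f hf hchain
    have step : ∀ n : ℕ, ⟪l, f n⟫ ≤ ⟪l, f 0⟫ - n := by
      intro n
      induction n with
      | zero => simp
      | succ n ih =>
        obtain ⟨hmem, hne⟩ := hchain n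
        have h1 : 1 ≤ ⟪l, f n - f (n + 1)⟫ :=
          (hNkey _ hmem).2.resolve_left (sub_ne_zero_of_ne fun h => hne h.symm)
        rw [inner_sub_right] at h1
        push_cast
        linarith
    obtain ⟨n, hn⟩ := exists_nat_gt ⟪l, f 0⟫
    have := hMnn (f n) (hf n)
    have := step n
    linarith
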